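/- If X is a crowded σ-space, then dis(X) = dis*(X), where dis*(X) is the least number of closed discrete sets required to cover X. -/

import Mathlib

open Set Cardinal TopologicalSpace

/-- A subset `s` of a topological space is discrete (as a subspace) iff every point of `s`
has an open neighbourhood in the ambient space meeting `s` only in that point. -/
def IsDiscreteSubset {X : Type*} [TopologicalSpace X] (s : Set X) : Prop :=
  ∀ x ∈ s, ∃ U : Set X, IsOpen U ∧ U ∩ s = {x}

/-- `dis X`: the least cardinality of a family of discrete subsets covering `X`. -/
noncomputable def dis (X : Type*) [TopologicalSpace X] : Cardinal :=
  sInf {c : Cardinal | ∃ 𝒟 : Set (Set X), #𝒟 = c ∧ (∀ D ∈ 𝒟, IsDiscreteSubset D) ∧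
    ⋃₀ 𝒟 = Set.univ}

/-- `Delta X`: the dispersion character, i.e. the least cardinality of a nonempty open set. -/
noncomputable def Delta (X : Type*) [TopologicalSpace X] : Cardinal :=
  sInf {c : Cardinal | ∃ U : Set X, IsOpen U ∧ U.Nonempty ∧ #U = c}

/-- A family `𝒩` of subsets is discrete if every point has an open neighbourhood meeting at
most one member of `𝒩`. -/
def IsDiscreteFamily {X : Type*} [TopologicalSpace X] (𝒩 : Set (Set X)) : Prop :=
  ∀ x : X, ∃ U : Set X, IsOpen U ∧ x ∈ U ∧ {N | N ∈ 𝒩 ∧ (U ∩ N).Nonempty}.Subsingleton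

/-- A network: for every open `U` and `x ∈ U` there is a member `N` with `x ∈ N ⊆ U`. -/
def IsNetwork {X : Type*} [TopologicalSpace X] (𝒩 : Set (Set X)) : Prop :=
  ∀ U : Set X, IsOpen U → ∀ x ∈ U, ∃ N ∈ 𝒩, x ∈ N ∧ N ⊆ U

/-- `X` has a σ-discrete network. -/
def HasSigmaDiscreteNetwork (X : Type*) [TopologicalSpace X] : Prop :=
  ∃ 𝒩 : ℕ → Set (Set X), (∀ n, IsDiscreteFamily (𝒩 n)) ∧ IsNetwork (⋃ n, 𝒩 n)

/-- `disStar X`: the least cardinality of a family of closed discrete subsets covering `X`. -/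
noncomputable def disStar (X : Type*) [TopologicalSpace X] : Cardinal :=
  sInf {c : Cardinal | ∃ 𝒟 : Set (Set X), #𝒟 = c ∧
    (∀ D ∈ 𝒟, IsClosed D ∧ IsDiscreteSubset D) ∧ ⋃₀ 𝒟 = Set.univ}

-- decomposition lemma
lemma decomp {X : Type*} [TopologicalSpace X] [T2Space X]
    (hnet : HasSigmaDiscreteNetwork X) (D : Set X) (hD : IsDiscreteSubset D) :
    ∃ f : ℕ → Set X, (∀ n, IsClosed (f n) ∧ IsDiscreteSubset (f n)) ∧ (⋃ n, f n) = D := by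
  obtain ⟨𝒩, hdisc, hnetw⟩ := hnet
  choose! U hUopen hUint using hD
  set f : ℕ → Set X := fun n => {x | x ∈ D ∧ ∃ N ∈ 𝒩 n, x ∈ N ∧ N ⊆ U x} with hf
  -- key: for each y and n, a nbhd meeting f n in at most a point
  have key : ∀ (n : ℕ) (y : X), ∃ V : Set X, IsOpen V ∧ y ∈ V ∧ (V ∩ f n).Subsingleton := by
    intro n y
    obtain ⟨V, hVo, hyV, hsub⟩ := hdisc n y
    refine ⟨V, hVo, hyV, ?_⟩
    rintro x₁ ⟨hx₁V, hx₁D, N₁, hN₁, hx₁N, hN₁U⟩ x₂ ⟨hx₂V, hx₂D, N₂, hN₂, hx₂N, hN₂U⟩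
    have hNeq : N₁ = N₂ := hsub ⟨hN₁, ⟨x₁, hx₁V, hx₁N⟩⟩ ⟨hN₂, ⟨x₂, hx₂V, hx₂N⟩⟩
    have : x₁ ∈ U x₂ ∩ D := ⟨hN₂U (hNeq ▸ hx₁N), hx₁D⟩
    have := (hUint x₂ hx₂D) ▸ this
    exact this
  refine ⟨f, fun n => ⟨?_, ?_⟩, ?_⟩
  · -- closed
    rw [← isOpen_compl_iff, isOpen_iff_forall_mem_open]
    intro y hy
    obtain ⟨V, hVo, hyV, hsub⟩ := key n y
    by_cases he : (V ∩ f n) = ∅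
    · exact ⟨V, fun z hz hzf => (Set.eq_empty_iff_forall_notMem.1 he z) ⟨hz, hzf⟩, hVo, hyV⟩
    · obtain ⟨x, hxV, hxf⟩ := Set.nonempty_iff_ne_empty.2 he
      have hxy : x ≠ y := fun h => hy (h ▸ hxf)
      refine ⟨V \ {x}, ?_, hVo.sdiff isClosed_singleton, ⟨hyV, fun h => hxy (h.symm)⟩⟩
      rintro z ⟨hzV, hzx⟩ hzf
      exact hzx (hsub ⟨hzV, hzf⟩ ⟨hxV, hxf⟩)
  · -- discrete
    intro x hx
    obtain ⟨V, hVo, hxV, hsub⟩ := key n x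
    refine ⟨V, hVo, ?_⟩
    apply Set.eq_singleton_iff_unique_mem.2
    exact ⟨⟨hxV, hx⟩, fun z hz => hsub hz ⟨hxV, hx⟩⟩
  · -- union
    apply Set.Subset.antisymm
    · rintro x ⟨s, ⟨n, rfl⟩, hxD, _⟩
      exact hxD
    · intro x hxD
      have hxU : x ∈ U x := by
        have := hUint x hxD
        have : x ∈ U x ∩ D := this ▸ rfl
        exact this.1
      obtain ⟨N, hN, hxN, hNU⟩ := hnetw (U x) (hUopen x hxD) x hxU
      obtain ⟨n, hn⟩ := Set.mem_iUnion.1 hN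
      exact Set.mem_iUnion.2 ⟨n, hxD, N, hn, hxN, hNU⟩

-- no finite cover of a nonempty open set by discrete sets in a crowded T2 space
lemma no_finite_cover {X : Type*} [TopologicalSpace X] [T2Space X]
    (hcrowded : ∀ x : X, ¬ IsOpen ({x} : Set X)) :
    ∀ (l : List (Set X)), (∀ D ∈ l, IsDiscreteSubset D) →
    ∀ V : Set X, IsOpen V → V.Nonempty → ¬ (V ⊆ ⋃ D ∈ l, D) := by
  intro l
  induction l with
  | nil =>
    intro _ V _ hne hsub
    obtain ⟨x, hx⟩ := hne
    simpa using hsub hx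
  | cons D t ih =>
    intro hall V hVo hVne hsub
    by_cases hVD : (V ∩ D).Nonempty
    · obtain ⟨x, hxV, hxD⟩ := hVD
      obtain ⟨Ux, hUo, hUint⟩ := hall D (List.mem_cons_self) x hxD
      set W := (V ∩ Ux) \ {x} with hW
      have hWo : IsOpen W := (hVo.inter hUo).sdiff isClosed_singleton
      have hWne : W.Nonempty := by
        by_contra hemp
        have h1 : V ∩ Ux ⊆ {x} := by
          intro z hz
          by_contra hzx
          exact Set.eq_empty_iff_forall_notMem.1
            (Set.not_nonempty_iff_eq_empty.1 hemp) z ⟨hz, hzx⟩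
        have h2 : V ∩ Ux = {x} :=
          Set.Subset.antisymm h1 (Set.singleton_subset_iff.2 ⟨hxV, by
            have : x ∈ Ux ∩ D := hUint ▸ rfl
            exact this.1⟩)
        exact hcrowded x (h2 ▸ (hVo.inter hUo))
      refine ih (fun E hE => hall E (List.mem_cons_of_mem D hE)) W hWo hWne ?_
      intro z hz
      have hzcov := hsub hz.1.1
      simp only [List.mem_cons, Set.mem_iUnion] at hzcov ⊢
      obtain ⟨E, hE, hzE⟩ := hzcov
      rcases hE with rfl | hE
      · exfalso
        have : z ∈ Ux ∩ E := ⟨hz.1.2, hzE⟩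
        rw [hUint] at this
        exact hz.2 this
      · exact ⟨E, hE, hzE⟩
    · obtain ⟨x, hx⟩ := hVne
      refine ih (fun E hE => hall E (List.mem_cons_of_mem D hE)) V hVo ⟨x, hx⟩ ?_
      intro z hz
      have := hsub hz
      simp only [List.mem_cons, Set.mem_iUnion] at this ⊢
      obtain ⟨E, hE, hzE⟩ := this
      rcases hE with rfl | hE
      · exact absurd ⟨z, hz, hzE⟩ hVD
      · exact ⟨E, hE, hzE⟩

lemma singleton_discrete {X : Type*} [TopologicalSpace X] (x : X) :
    IsDiscreteSubset ({x} : Set X) := by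
  intro y hy
  rw [Set.mem_singleton_iff] at hy
  subst hy
  exact ⟨Set.univ, isOpen_univ, by simp⟩

/-- In a crowded σ-space, `dis X = disStar X`. -/
theorem statement4 (X : Type*) [TopologicalSpace X] [T2Space X]
    (hcrowded : ∀ x : X, ¬ IsOpen ({x} : Set X))
    (hnet : HasSigmaDiscreteNetwork X) :
    dis X = disStar X := by
  classical
  set T := {c : Cardinal | ∃ 𝒟 : Set (Set X), #𝒟 = c ∧
    (∀ D ∈ 𝒟, IsClosed D ∧ IsDiscreteSubset D) ∧ ⋃₀ 𝒟 = Set.univ} with hT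
  set S := {c : Cardinal | ∃ 𝒟 : Set (Set X), #𝒟 = c ∧ (∀ D ∈ 𝒟, IsDiscreteSubset D) ∧
    ⋃₀ 𝒟 = Set.univ} with hS
  have hdisS : dis X = sInf S := rfl
  have hdisT : disStar X = sInf T := rfl
  have hTsub : T ⊆ S := by
    rintro c ⟨𝒟, h1, h2, h3⟩
    exact ⟨𝒟, h1, fun D hD => (h2 D hD).2, h3⟩
  have hTne : T.Nonempty := by
    refine ⟨#(Set.range (fun x : X => ({x} : Set X))), Set.range (fun x => {x}), rfl, ?_, ?_⟩
    · rintro D ⟨x, rfl⟩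
      exact ⟨isClosed_singleton, singleton_discrete x⟩
    · rw [Set.sUnion_range]
      exact Set.iUnion_of_singleton X
  have hSne : S.Nonempty := ⟨_, hTsub hTne.choose_spec⟩
  -- dis ≤ disStar
  have h1 : dis X ≤ disStar X := by
    rw [hdisS, hdisT]
    exact csInf_le' (hTsub (csInf_mem hTne))
  -- disStar ≤ dis
  have h2 : disStar X ≤ dis X := by
    obtain ⟨𝒟, hcard, hdisc, hcover⟩ := csInf_mem hSne
    rw [← hdisS] at hcard
    rcases isEmpty_or_nonempty X with hempty | hnonempty
    · have h0 : (0 : Cardinal) ∈ T := by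
        refine ⟨∅, by simp, by simp, ?_⟩
        rw [Set.sUnion_empty]
        exact (Set.univ_eq_empty_iff.2 hempty).symm
      rw [hdisT]
      exact le_trans (csInf_le' h0) (zero_le)
    · -- X nonempty; dis X is infinite
      have hinf : ℵ₀ ≤ dis X := by
        by_contra hlt
        push_neg at hlt
        rw [← hcard] at hlt
        have hfin : 𝒟.Finite := Cardinal.lt_aleph0_iff_set_finite.1 hlt
        have hmem : ∀ D, D ∈ hfin.toFinset.toList ↔ D ∈ 𝒟 := by
          intro D
          rw [Finset.mem_toList, Set.Finite.mem_toFinset]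
        refine no_finite_cover hcrowded hfin.toFinset.toList
          (fun D hD => hdisc D ((hmem D).1 hD)) Set.univ isOpen_univ Set.univ_nonempty ?_
        intro x _
        have hx : x ∈ ⋃₀ 𝒟 := hcover ▸ Set.mem_univ x
        obtain ⟨D, hD, hxD⟩ := hx
        exact Set.mem_iUnion.2 ⟨D, Set.mem_iUnion.2 ⟨(hmem D).2 hD, hxD⟩⟩
      choose F hF1 hF2 using fun D : ↥𝒟 => decomp hnet D (hdisc D D.2)
      set g : ↥𝒟 × ℕ → Set X := fun p => F p.1 p.2 with hg
      have hTmem : #(Set.range g) ∈ T := by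
        refine ⟨Set.range g, rfl, ?_, ?_⟩
        · rintro E ⟨p, rfl⟩
          exact hF1 p.1 p.2
        · apply Set.eq_univ_of_univ_subset
          intro x _
          have hx : x ∈ ⋃₀ 𝒟 := hcover ▸ Set.mem_univ x
          obtain ⟨D, hD, hxD⟩ := hx
          have : x ∈ ⋃ n, F ⟨D, hD⟩ n := (hF2 ⟨D, hD⟩).symm ▸ hxD
          obtain ⟨n, hn⟩ := Set.mem_iUnion.1 this
          exact ⟨g (⟨D, hD⟩, n), ⟨(⟨D, hD⟩, n), rfl⟩, hn⟩
      have hle : #(Set.range g) ≤ #𝒟 * ℵ₀ := by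
        refine le_trans Cardinal.mk_range_le ?_
        rw [Cardinal.mk_prod, Cardinal.mk_nat, Cardinal.lift_aleph0, Cardinal.lift_uzero]
      rw [hdisT]
      refine le_trans (csInf_le' hTmem) (le_trans hle ?_)
      rw [hcard, Cardinal.mul_aleph0_eq hinf]
  exact le_antisymm h1 h2
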